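/- Let E be a Banach lattice such that E* does not have an order continuous norm, and F a Banach lattice that is not a KB-space... then there exists an increasing sequence (Tₙ) of positive compact operators from E to F whose supremum S in the regular operators exists but is not compact. In particular, if the supremum of every increasing sequence of positive compact operators E → F (when it exists in L^r(E,F)) is compact, and E fails the positive dual Schur property, then F is a KB-space. -/

import Mathlib

open Filter Topology

noncomputable section

set_option linter.unusedSectionVars false
set_option maxHeartbeats 4000000

section AuxLemmas

variable {α : Type*} [NormedAddCommGroup α] [Lattice α] [HasSolidNorm α] [IsOrderedAddMonoid α]

private lemma norm_le_of_nonneg_of_le {a b : α} (ha : 0 ≤ a) (hab : a ≤ b) : ‖a‖ ≤ ‖b‖ :=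
  norm_le_norm_of_abs_le_abs (by rwa [abs_of_nonneg ha, abs_of_nonneg (ha.trans hab)])

private lemma posPart_norm_le (x : α) : ‖x⁺‖ ≤ ‖x‖ := by
  have h1 : x⁺ ≤ |x| := by
    rw [posPart_def]
    exact sup_le (le_abs_self x) (abs_nonneg x)
  calc ‖x⁺‖ ≤ ‖|x|‖ := norm_le_of_nonneg_of_le (posPart_nonneg x) h1
    _ = ‖x‖ := norm_abs_eq_norm x

private lemma negPart_norm_le (x : α) : ‖x⁻‖ ≤ ‖x‖ := by
  have h1 : x⁻ ≤ |x| := by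
    rw [negPart_def]
    exact sup_le (neg_le_abs x) (abs_nonneg x)
  calc ‖x⁻‖ ≤ ‖|x|‖ := norm_le_of_nonneg_of_le (negPart_nonneg x) h1
    _ = ‖x‖ := norm_abs_eq_norm x

variable [NormedSpace ℝ α]

private lemma two_pow_nsmul_semiclosed : ∀ (k : ℕ) (y : α), 0 ≤ (2 ^ k) • y → 0 ≤ y := by
  intro k
  induction k with
  | zero => intro y hy; simpa using hy
  | succ n ih =>
    intro y hy
    have h2 : (2 ^ (n + 1)) • y = (2 ^ n) • (2 • y) := by
      rw [← mul_nsmul]; ring_nf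
    rw [h2] at hy
    exact nsmul_two_semiclosed (ih _ hy)

private lemma real_smul_nonneg {c : ℝ} (hc : 0 ≤ c) {x : α} (hx : 0 ≤ x) : 0 ≤ c • x := by
  have hdyadic : ∀ k : ℕ, 0 ≤ ((⌈c * 2 ^ k⌉₊ : ℝ) / 2 ^ k) • x := by
    intro k
    have hy : (0:α) ≤ ((2:ℝ) ^ k)⁻¹ • x := by
      apply two_pow_nsmul_semiclosed k
      have : ((2:ℕ) ^ k) • (((2:ℝ) ^ k)⁻¹ • x) = x := by
        rw [← Nat.cast_smul_eq_nsmul ℝ, smul_smul]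
        push_cast
        rw [mul_inv_cancel₀ (by positivity), one_smul]
      rw [this]; exact hx
    have : ((⌈c * 2 ^ k⌉₊ : ℝ) / 2 ^ k) • x = (⌈c * 2 ^ k⌉₊ : ℕ) • (((2:ℝ) ^ k)⁻¹ • x) := by
      rw [← Nat.cast_smul_eq_nsmul ℝ, smul_smul, div_eq_mul_inv]
    rw [this]
    exact nsmul_nonneg hy _
  have htend : Tendsto (fun k : ℕ => ((⌈c * 2 ^ k⌉₊ : ℝ) / 2 ^ k) • x) atTop (𝓝 (c • x)) := by
    have h1 : Tendsto (fun k : ℕ => (⌈c * 2 ^ k⌉₊ : ℝ) / 2 ^ k) atTop (𝓝 c) := by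
      have hle : ∀ k : ℕ, (⌈c * 2 ^ k⌉₊ : ℝ) / 2 ^ k ≤ c + (1/2) ^ k := by
        intro k
        rw [div_le_iff₀ (by positivity)]
        have := (Nat.ceil_lt_add_one (by positivity : (0:ℝ) ≤ c * 2 ^ k)).le
        calc (⌈c * 2 ^ k⌉₊ : ℝ) ≤ c * 2 ^ k + 1 := this
          _ = (c + (1/2)^k) * 2 ^ k := by
            ring_nf
            rw [one_div, inv_pow, inv_mul_cancel₀ (by positivity)]
            ring
      have hge : ∀ k : ℕ, c ≤ (⌈c * 2 ^ k⌉₊ : ℝ) / 2 ^ k := by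
        intro k
        rw [le_div_iff₀ (by positivity)]
        exact Nat.le_ceil _
      have hupper : Tendsto (fun k : ℕ => c + (1/2:ℝ) ^ k) atTop (𝓝 c) := by
        have := tendsto_pow_atTop_nhds_zero_of_lt_one (by norm_num : (0:ℝ) ≤ 1/2)
          (by norm_num : (1/2:ℝ) < 1)
        simpa using (tendsto_const_nhds.add this)
      exact tendsto_of_tendsto_of_tendsto_of_le_of_le tendsto_const_nhds hupper hge hle
    exact h1.smul_const x
  exact ge_of_tendsto' htend hdyadic

private lemma smul_le_smul_vec {c : ℝ} (hc : 0 ≤ c) {a b : α} (hab : a ≤ b) : c • a ≤ c • b := by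
  have := real_smul_nonneg hc (sub_nonneg.2 hab)
  rw [smul_sub] at this
  exact sub_nonneg.1 this

private lemma smul_le_smul_coeff {c d : ℝ} (hcd : c ≤ d) {a : α} (ha : 0 ≤ a) : c • a ≤ d • a := by
  have := real_smul_nonneg (sub_nonneg.2 hcd) ha
  rw [sub_smul] at this
  exact sub_nonneg.1 this

private lemma posPart_smul_eq {c : ℝ} (hc : 0 < c) (x : α) : (c • x)⁺ = c • x⁺ := by
  have key : ∀ (d : ℝ), 0 < d → ∀ y : α, (d • y)⁺ ≤ d • y⁺ := by
    intro d hd y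
    rw [posPart_def]
    refine sup_le ?_ ?_
    · exact smul_le_smul_vec hd.le (le_posPart y)
    · exact real_smul_nonneg hd.le (posPart_nonneg y)
  refine le_antisymm (key c hc x) ?_
  have h2 := key c⁻¹ (by positivity) (c • x)
  rw [inv_smul_smul₀ hc.ne'] at h2
  have := smul_le_smul_vec hc.le h2
  rwa [smul_inv_smul₀ hc.ne'] at this

private lemma posPart_add_le' (a b : α) : (a + b)⁺ ≤ a⁺ + b⁺ := by
  rw [posPart_def]
  exact sup_le (add_le_add (le_posPart a) (le_posPart b))
    (add_nonneg (posPart_nonneg a) (posPart_nonneg b))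

/-- A positive norming functional for any nonzero positive element. -/
private lemma exists_positive_norming {u : α} (hu : 0 ≤ u) (hu0 : u ≠ 0) :
    ∃ f : α →L[ℝ] ℝ, (∀ y : α, 0 ≤ y → 0 ≤ f y) ∧ ‖f‖ ≤ 1 ∧ f u = ‖u‖ := by
  set N : α → ℝ := fun x => ‖x⁺‖ with hN
  have hNhom : ∀ c : ℝ, 0 < c → ∀ x : α, N (c • x) = c * N x := by
    intro c hc x
    simp only [hN, posPart_smul_eq hc, norm_smul, Real.norm_eq_abs, abs_of_pos hc]
  have hNadd : ∀ x y : α, N (x + y) ≤ N x + N y := by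
    intro x y
    calc ‖(x+y)⁺‖ ≤ ‖x⁺ + y⁺‖ :=
          norm_le_of_nonneg_of_le (posPart_nonneg _) (posPart_add_le' x y)
      _ ≤ ‖x⁺‖ + ‖y⁺‖ := norm_add_le _ _
  have hupos : u⁺ = u := posPart_eq_self.2 hu
  set f₀ : α →ₗ.[ℝ] ℝ := LinearPMap.mkSpanSingleton u (‖u‖:ℝ) hu0 with hf₀
  have hdom : ∀ x : f₀.domain, f₀ x ≤ N x.1 := by
    rintro ⟨x, hx⟩
    obtain ⟨t, ht⟩ := Submodule.mem_span_singleton.1 (hx : x ∈ Submodule.span ℝ {u})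
    subst ht
    rw [LinearPMap.mkSpanSingleton'_apply]
    rcases le_or_gt t 0 with ht | ht
    · have h1 : t • ‖u‖ ≤ 0 := smul_nonpos_of_nonpos_of_nonneg ht (norm_nonneg u)
      exact h1.trans (norm_nonneg _)
    · have h2 : N (t • u) = t * ‖u‖ := by
        rw [hNhom t ht]
        simp only [hN, hupos]
      rw [h2]
      simp [smul_eq_mul]
  obtain ⟨g, hg1, hg2⟩ := exists_extension_of_le_sublinear _ N hNhom hNadd hdom
  have hub : ∀ x : α, |g x| ≤ 1 * ‖x‖ := by
    intro x
    rw [abs_le, one_mul]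
    constructor
    · have := hg2 (-x)
      rw [map_neg] at this
      have h3 : N (-x) ≤ ‖x‖ := by
        simpa only [hN, posPart_neg] using (negPart_norm_le x)
      linarith
    · exact (hg2 x).trans (posPart_norm_le x)
  refine ⟨g.mkContinuous 1 hub, ?_, g.mkContinuous_norm_le zero_le_one hub, ?_⟩
  · intro y hy
    have h4 := hg2 (-y)
    rw [map_neg] at h4
    have h5 : N (-y) = 0 := by
      simp only [hN]
      rw [posPart_neg, negPart_eq_zero.2 hy, norm_zero]
    have : (g.mkContinuous 1 hub) y = g y := rfl
    rw [this]; linarith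
  · have h6 := hg1 ⟨u, Submodule.mem_span_singleton_self u⟩
    have h7 : f₀ ⟨u, Submodule.mem_span_singleton_self u⟩ = ‖u‖ :=
      LinearPMap.mkSpanSingleton_apply ℝ ℝ hu0 ‖u‖
    have : (g.mkContinuous 1 hub) u = g u := rfl
    rw [this, h6, h7]

/-- norming positive vector for a positive normalized functional -/
private lemma exists_norming_vec {E : Type*} [NormedAddCommGroup E] [Lattice E] [HasSolidNorm E] [IsOrderedAddMonoid E] [NormedSpace ℝ E]
    (z : E →L[ℝ] ℝ) (hzpos : ∀ x : E, 0 ≤ x → 0 ≤ z x) (hz : ‖z‖ = 1) :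
    ∃ x : E, 0 ≤ x ∧ ‖x‖ ≤ 1 ∧ 1/2 ≤ z x := by
  have hmono : ∀ a b : E, a ≤ b → z a ≤ z b := by
    intro a b hab
    have := hzpos (b - a) (sub_nonneg.2 hab)
    rw [map_sub] at this
    linarith
  obtain ⟨x₀, hx₀, hval⟩ := z.exists_lt_apply_of_lt_opNorm (r := 1/2) (by rw [hz]; norm_num)
  refine ⟨|x₀|, abs_nonneg x₀, by rw [norm_abs_eq_norm]; exact hx₀.le, ?_⟩
  have h1 : z x₀ ≤ z |x₀| := hmono _ _ (le_abs_self x₀)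
  have h2 : -(z |x₀|) ≤ z x₀ := by
    have := hmono _ _ (neg_le.1 (neg_le_abs x₀))
    rw [map_neg] at this
    linarith
  have : |z x₀| ≤ z |x₀| := abs_le.2 ⟨by linarith, h1⟩
  rw [Real.norm_eq_abs] at hval
  linarith

/-- generic recursive subsequence extraction -/
private lemma exists_strictMono_of_rec (Q : ℕ → ℕ → ℕ → Prop)
    (h : ∀ i N, ∃ n, N < n ∧ Q i N n) :
    ∃ φ : ℕ → ℕ, StrictMono φ ∧ Q 0 0 (φ 0) ∧ ∀ i, Q (i + 1) (φ i) (φ (i + 1)) := by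
  let φ : ℕ → ℕ := fun i => Nat.rec (h 0 0).choose (fun i prev => (h (i + 1) prev).choose) i
  have hs : ∀ i, φ (i + 1) = (h (i + 1) (φ i)).choose := fun i => rfl
  refine ⟨φ, strictMono_nat_of_lt_succ fun i => ?_, (h 0 0).choose_spec.2, fun i => ?_⟩
  · rw [hs]; exact (h (i + 1) (φ i)).choose_spec.1
  · rw [hs]; exact (h (i + 1) (φ i)).choose_spec.2

/-- rank one operators are compact -/
private lemma isCompactOperator_smulRight {E : Type*} [NormedAddCommGroup E] [NormedSpace ℝ E]
    {G : Type*} [NormedAddCommGroup G] [NormedSpace ℝ G]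
    (z : E →L[ℝ] ℝ) (u : G) : IsCompactOperator ⇑(z.smulRight u) := by
  refine ⟨(fun t : ℝ => t • u) '' Metric.closedBall 0 1,
    ((isCompact_closedBall (0:ℝ) 1).image (continuous_id.smul continuous_const)), ?_⟩
  have h0 : z ⁻¹' Metric.closedBall 0 1 ∈ 𝓝 (0 : E) := by
    apply z.continuous.continuousAt.preimage_mem_nhds
    rw [map_zero]
    exact Metric.closedBall_mem_nhds (0:ℝ) one_pos
  refine Filter.mem_of_superset h0 ?_
  intro x hx
  exact ⟨z x, hx, by simp⟩

/-- finite sums of compact operators are compact -/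
private lemma isCompactOperator_sum {E : Type*} [NormedAddCommGroup E] [NormedSpace ℝ E]
    {G : Type*} [NormedAddCommGroup G] [NormedSpace ℝ G]
    (T : ℕ → (E →L[ℝ] G)) (h : ∀ k, IsCompactOperator ⇑(T k)) (n : ℕ) :
    IsCompactOperator ⇑(∑ k ∈ Finset.range n, T k) := by
  induction n with
  | zero =>
    simp only [Finset.range_zero, Finset.sum_empty]
    have : ⇑(0 : E →L[ℝ] G) = fun _ => (0:G) := rfl
    rw [this]
    exact isCompactOperator_zero
  | succ n ih =>
    rw [Finset.sum_range_succ]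
    have : ⇑((∑ k ∈ Finset.range n, T k) + T n) = ⇑(∑ k ∈ Finset.range n, T k) + ⇑(T n) := rfl
    rw [this]
    exact ih.add (h n)

/-- Extraction from a non-KB space. -/
private lemma exists_bad_seq {α : Type*} [NormedAddCommGroup α] [Lattice α] [HasSolidNorm α] [IsOrderedAddMonoid α] [NormedSpace ℝ α]
    [CompleteSpace α]
    (h : ¬ (∀ f : ℕ → α, Monotone f → (∀ n, 0 ≤ f n) → (∃ C, ∀ n, ‖f n‖ ≤ C) →
      ∃ y, Tendsto f atTop (𝓝 y))) :
    ∃ (ε C : ℝ), 0 < ε ∧ 0 < C ∧ ∃ u : ℕ → α, (∀ k, 0 ≤ u k) ∧ (∀ k, ε ≤ ‖u k‖) ∧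
      (∀ s : Finset ℕ, ‖∑ k ∈ s, u k‖ ≤ C) := by
  push_neg at h
  obtain ⟨f, hmono, hpos, ⟨C₀, hbdd⟩, hnolim⟩ := h
  have hnc : ¬ CauchySeq f := by
    intro hc
    obtain ⟨y, hy⟩ := cauchySeq_tendsto_of_complete hc
    exact hnolim y hy
  rw [Metric.cauchySeq_iff] at hnc
  push_neg at hnc
  obtain ⟨ε, hε, hkey⟩ := hnc
  have key : ∀ N : ℕ, ∃ p : ℕ × ℕ, N < p.1 ∧ p.1 < p.2 ∧ ε ≤ ‖f p.2 - f p.1‖ := by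
    intro N
    obtain ⟨m, hm, n, hn, hd⟩ := hkey (N + 1)
    have hmn : m ≠ n := by
      intro hmn
      rw [hmn, dist_self] at hd
      exact absurd hd (not_le.2 hε)
    rcases hmn.lt_or_gt with hlt | hlt
    · exact ⟨(m, n), hm, hlt, by rwa [dist_eq_norm, norm_sub_rev] at hd⟩
    · exact ⟨(n, m), hn, hlt, by rwa [dist_eq_norm] at hd⟩
  let ab : ℕ → ℕ × ℕ := fun i => Nat.rec (key 0).choose (fun _ prev => (key prev.2).choose) i
  have hab : ∀ i, (ab i).1 < (ab i).2 ∧ ε ≤ ‖f (ab i).2 - f (ab i).1‖ := by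
    intro i
    cases i with
    | zero => exact ⟨(key 0).choose_spec.2.1, (key 0).choose_spec.2.2⟩
    | succ n => exact ⟨(key (ab n).2).choose_spec.2.1, (key (ab n).2).choose_spec.2.2⟩
  have hgap : ∀ i, (ab i).2 < (ab (i + 1)).1 := fun i => (key (ab i).2).choose_spec.1
  set u : ℕ → α := fun k => f (ab k).2 - f (ab k).1 with hu
  have hupos : ∀ k, 0 ≤ u k := fun k => sub_nonneg.2 (hmono (hab k).1.le)
  have husum : ∀ n, ∑ k ∈ Finset.range n, u k ≤ f (ab n).1 - f (ab 0).1 := by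
    intro n
    induction n with
    | zero => simp
    | succ n ih =>
      rw [Finset.sum_range_succ]
      have h1 : f (ab n).2 ≤ f (ab (n + 1)).1 := hmono (hgap n).le
      calc ∑ k ∈ Finset.range n, u k + u n
          ≤ (f (ab n).1 - f (ab 0).1) + (f (ab n).2 - f (ab n).1) := add_le_add ih le_rfl
        _ = f (ab n).2 - f (ab 0).1 := by abel
        _ ≤ f (ab (n + 1)).1 - f (ab 0).1 := sub_le_sub_right h1 _
  have hC₀ : 0 ≤ C₀ := (norm_nonneg (f 0)).trans (hbdd 0)
  refine ⟨ε, 2 * C₀ + 1, hε, by linarith, u, hupos, fun k => (hab k).2, ?_⟩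
  intro s
  set n := s.sup id + 1 with hn
  have hsub : s ⊆ Finset.range n := by
    intro k hk
    rw [Finset.mem_range, hn]
    exact Nat.lt_succ_of_le (Finset.le_sup (f := id) hk)
  have h1 : ∑ k ∈ s, u k ≤ ∑ k ∈ Finset.range n, u k :=
    Finset.sum_le_sum_of_subset_of_nonneg hsub (fun k _ _ => hupos k)
  have h2 : (0:α) ≤ ∑ k ∈ s, u k := Finset.sum_nonneg (fun k _ => hupos k)
  calc ‖∑ k ∈ s, u k‖ ≤ ‖f (ab n).1 - f (ab 0).1‖ :=
        norm_le_of_nonneg_of_le h2 (h1.trans (husum n))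
    _ ≤ ‖f (ab n).1‖ + ‖f (ab 0).1‖ := norm_sub_le _ _
    _ ≤ 2 * C₀ + 1 := by linarith [hbdd (ab n).1, hbdd (ab 0).1]

end AuxLemmas

/-- A continuous linear map between Banach lattices is *positive* if it maps the
positive cone into the positive cone. -/
def IsPositiveOp {E F : Type*} [NormedAddCommGroup E] [Lattice E] [HasSolidNorm E] [IsOrderedAddMonoid E] [NormedSpace ℝ E]
    [NormedAddCommGroup F] [Lattice F] [HasSolidNorm F] [IsOrderedAddMonoid F] [NormedSpace ℝ F] (T : E →L[ℝ] F) : Prop :=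
  ∀ x : E, 0 ≤ x → 0 ≤ T x

/-- `T` is a regular operator: a difference of two positive operators. -/
def IsRegularOp {E F : Type*} [NormedAddCommGroup E] [Lattice E] [HasSolidNorm E] [IsOrderedAddMonoid E] [NormedSpace ℝ E]
    [NormedAddCommGroup F] [Lattice F] [HasSolidNorm F] [IsOrderedAddMonoid F] [NormedSpace ℝ F] (T : E →L[ℝ] F) : Prop :=
  ∃ S₁ S₂ : E →L[ℝ] F, IsPositiveOp S₁ ∧ IsPositiveOp S₂ ∧ T = S₁ - S₂

/-- `T` belongs to `K^r(E,F)`: a difference of two positive compact operators. -/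
def IsCompactRegOp {E F : Type*} [NormedAddCommGroup E] [Lattice E] [HasSolidNorm E] [IsOrderedAddMonoid E] [NormedSpace ℝ E]
    [NormedAddCommGroup F] [Lattice F] [HasSolidNorm F] [IsOrderedAddMonoid F] [NormedSpace ℝ F] (T : E →L[ℝ] F) : Prop :=
  ∃ S₁ S₂ : E →L[ℝ] F, IsPositiveOp S₁ ∧ IsPositiveOp S₂ ∧
    IsCompactOperator ⇑S₁ ∧ IsCompactOperator ⇑S₂ ∧ T = S₁ - S₂

/-- The regular norm `‖T‖_r = inf {‖S‖ : S ≥ ±T}`. -/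
def regNorm {E F : Type*} [NormedAddCommGroup E] [Lattice E] [HasSolidNorm E] [IsOrderedAddMonoid E] [NormedSpace ℝ E]
    [NormedAddCommGroup F] [Lattice F] [HasSolidNorm F] [IsOrderedAddMonoid F] [NormedSpace ℝ F] (T : E →L[ℝ] F) : ℝ :=
  sInf {c : ℝ | ∃ S : E →L[ℝ] F, IsPositiveOp (S - T) ∧ IsPositiveOp (S + T) ∧ ‖S‖ = c}

/-- The k-norm `‖T‖_k = inf {‖S‖ : S ∈ K^r(E,F), S ≥ ±T}`. -/
def kNorm {E F : Type*} [NormedAddCommGroup E] [Lattice E] [HasSolidNorm E] [IsOrderedAddMonoid E] [NormedSpace ℝ E]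
    [NormedAddCommGroup F] [Lattice F] [HasSolidNorm F] [IsOrderedAddMonoid F] [NormedSpace ℝ F] (T : E →L[ℝ] F) : ℝ :=
  sInf {c : ℝ | ∃ S : E →L[ℝ] F, IsCompactRegOp S ∧
    IsPositiveOp (S - T) ∧ IsPositiveOp (S + T) ∧ ‖S‖ = c}

/-- The order on operators: `T ≤ S` iff `T x ≤ S x` for all `x ≥ 0`. -/
def OpLE {E F : Type*} [NormedAddCommGroup E] [Lattice E] [HasSolidNorm E] [IsOrderedAddMonoid E] [NormedSpace ℝ E]
    [NormedAddCommGroup F] [Lattice F] [HasSolidNorm F] [IsOrderedAddMonoid F] [NormedSpace ℝ F] (T S : E →L[ℝ] F) : Prop :=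
  ∀ x : E, 0 ≤ x → T x ≤ S x

/-- A Banach lattice is a KB-space if every norm-bounded increasing sequence of
positive elements converges in norm. -/
def IsKBSpace (F : Type*) [NormedAddCommGroup F] [Lattice F] [HasSolidNorm F] [IsOrderedAddMonoid F] : Prop :=
  ∀ f : ℕ → F, Monotone f → (∀ n, 0 ≤ f n) → (∃ C, ∀ n, ‖f n‖ ≤ C) →
    ∃ y, Tendsto f atTop (𝓝 y)

/-- An atom of a Banach lattice. -/
def IsLatticeAtom {E : Type*} [NormedAddCommGroup E] [Lattice E] [HasSolidNorm E] [IsOrderedAddMonoid E] [NormedSpace ℝ E] (e : E) : Prop :=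
  0 < e ∧ ∀ x : E, 0 ≤ x → x ≤ e → ∃ t : ℝ, x = t • e

/-- An atomic Banach lattice: every nonzero positive element dominates an atom. -/
def IsAtomicLattice (E : Type*) [NormedAddCommGroup E] [Lattice E] [HasSolidNorm E] [IsOrderedAddMonoid E] [NormedSpace ℝ E] : Prop :=
  ∀ x : E, 0 < x → ∃ a : E, IsLatticeAtom a ∧ a ≤ x

/-- The norm is order continuous: every downward directed net decreasing to `0`
converges to `0` in norm. -/
def HasOrderContinuousNorm (E : Type*) [NormedAddCommGroup E] [Lattice E] [HasSolidNorm E] [IsOrderedAddMonoid E] : Prop :=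
  ∀ (ι : Type) [Preorder ι] [IsDirected ι (· ≤ ·)] (x : ι → E),
    Antitone x → IsGLB (Set.range x) 0 → Tendsto (fun i => ‖x i‖) atTop (𝓝 0)

/-- let `E` fail the positive dual Schur property (there is a normalized
positive weak*-null sequence `(zₙ)` in `E*₊`). If `F` is not a KB-space, then there is
an increasing sequence `(Tₙ)` of positive compact operators whose supremum `S` in the
operator order exists but is not compact. In particular, if the supremum of every
increasing sequence of positive compact operators (when it exists) is compact, then
`F` is a KB-space. -/
theorem stmt14 {E F : Type*}
    [NormedAddCommGroup E] [Lattice E] [HasSolidNorm E] [IsOrderedAddMonoid E] [NormedSpace ℝ E] [CompleteSpace E]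
    [NormedAddCommGroup F] [Lattice F] [HasSolidNorm F] [IsOrderedAddMonoid F] [NormedSpace ℝ F] [CompleteSpace F]
    (hE : ∃ z : ℕ → (E →L[ℝ] ℝ), (∀ n, ‖z n‖ = 1) ∧ (∀ n, IsPositiveOp (z n)) ∧
      (∀ x : E, Tendsto (fun n => z n x) atTop (𝓝 0))) :
    (¬ IsKBSpace F →
      ∃ (T : ℕ → (E →L[ℝ] F)) (S : E →L[ℝ] F),
        (∀ n, IsPositiveOp (T n) ∧ IsCompactOperator ⇑(T n)) ∧
        (∀ n, OpLE (T n) (T (n + 1))) ∧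
        (∀ n, OpLE (T n) S) ∧
        (∀ R : E →L[ℝ] F, (∀ n, OpLE (T n) R) → OpLE S R) ∧
        ¬ IsCompactOperator ⇑S) ∧
    ((∀ (T : ℕ → (E →L[ℝ] F)) (S : E →L[ℝ] F),
        (∀ n, IsPositiveOp (T n) ∧ IsCompactOperator ⇑(T n)) →
        (∀ n, OpLE (T n) (T (n + 1))) →
        (∀ n, OpLE (T n) S) →
        (∀ R : E →L[ℝ] F, (∀ n, OpLE (T n) R) → OpLE S R) →
        IsCompactOperator ⇑S) →
      IsKBSpace F) := by
  classical
  obtain ⟨z, hznorm, hzpos, hznull⟩ := hE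
  have main : ¬ IsKBSpace F →
      ∃ (T : ℕ → (E →L[ℝ] F)) (S : E →L[ℝ] F),
        (∀ n, IsPositiveOp (T n) ∧ IsCompactOperator ⇑(T n)) ∧
        (∀ n, OpLE (T n) (T (n + 1))) ∧
        (∀ n, OpLE (T n) S) ∧
        (∀ R : E →L[ℝ] F, (∀ n, OpLE (T n) R) → OpLE S R) ∧
        ¬ IsCompactOperator ⇑S := by
    intro hKB
    obtain ⟨ε, C, hε, hC, u₀, hu₀pos, hu₀norm, hu₀sum⟩ := exists_bad_seq hKB
    -- positive norming functionals for the `u₀ k`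
    have hu0ne : ∀ k, u₀ k ≠ 0 := by
      intro k hk
      have := hu₀norm k
      rw [hk, norm_zero] at this
      linarith
    choose f0 hf0pos hf0norm hf0val using fun k => exists_positive_norming (hu₀pos k) (hu0ne k)
    -- a weak-* cluster point of the norming functionals
    set fw : ℕ → WeakDual ℝ F := fun k => StrongDual.toWeakDual (f0 k) with hfw
    have hball : ∀ k, fw k ∈ ⇑WeakDual.toStrongDual ⁻¹' Metric.closedBall 0 1 := by
      intro k
      simp only [Set.mem_preimage, mem_closedBall_zero_iff]
      exact hf0norm k
    obtain ⟨g, hgmem, hgcl⟩ := (WeakDual.isCompact_closedBall (0 : StrongDual ℝ F)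
        1).exists_clusterPt (f := Filter.map fw atTop)
        (le_principal_iff.2 (Filter.mem_map.2 (Filter.Eventually.of_forall hball)))
    have hmcp : MapClusterPt g atTop fw := hgcl
    have hfreq : ∀ s : Set (WeakDual ℝ F), s ∈ 𝓝 g → ∃ᶠ k in atTop, fw k ∈ s :=
      mapClusterPt_iff_frequently.1 hmcp
    set G : F →L[ℝ] ℝ := WeakDual.toStrongDual g with hGdef
    have hGnorm : ‖G‖ ≤ 1 := by
      simpa [mem_closedBall_zero_iff] using hgmem
    have hGapp : ∀ y : F, G y = g y := fun y => rfl
    have hGpos : ∀ y : F, 0 ≤ y → 0 ≤ G y := by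
      intro y hy
      by_contra hneg
      push_neg at hneg
      have hopen : IsOpen {φ : WeakDual ℝ F | φ y < 0} :=
        isOpen_lt (WeakDual.eval_continuous y) continuous_const
      have hmem : g ∈ {φ : WeakDual ℝ F | φ y < 0} := by
        show g y < 0
        rw [← hGapp]; exact hneg
      obtain ⟨k, hk⟩ := (hfreq _ (hopen.mem_nhds hmem)).exists
      exact absurd hk (not_lt.2 (hf0pos k y hy))
    -- tails against `u₀`
    have hsumrange : ∀ (h' : F →L[ℝ] ℝ), ‖h'‖ ≤ 1 →
        ∀ K, ∑ k ∈ Finset.range K, h' (u₀ k) ≤ C := by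
      intro h' hn K
      have h1 : ∑ k ∈ Finset.range K, h' (u₀ k) = h' (∑ k ∈ Finset.range K, u₀ k) :=
        (map_sum h' _ _).symm
      rw [h1]
      calc h' (∑ k ∈ Finset.range K, u₀ k) ≤ |h' (∑ k ∈ Finset.range K, u₀ k)| := le_abs_self _
        _ ≤ ‖h'‖ * ‖∑ k ∈ Finset.range K, u₀ k‖ := by
            rw [← Real.norm_eq_abs]; exact h'.le_opNorm _
        _ ≤ 1 * C := mul_le_mul hn (hu₀sum _) (norm_nonneg _) zero_le_one
        _ = C := one_mul C
    have hGtend : Tendsto (fun k => G (u₀ k)) atTop (𝓝 0) :=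
      (summable_of_sum_range_le (fun k => hGpos _ (hu₀pos k))
        (hsumrange G hGnorm)).tendsto_atTop_zero
    have hf0tend : ∀ m, Tendsto (fun k => f0 m (u₀ k)) atTop (𝓝 0) := fun m =>
      (summable_of_sum_range_le (fun k => hf0pos m _ (hu₀pos k))
        (hsumrange (f0 m) (hf0norm m))).tendsto_atTop_zero
    -- the sequence of tolerances
    set δ : ℕ → ℝ := fun i => ε / 64 * (1 / 2) ^ i with hδdef
    have hδpos : ∀ i, 0 < δ i := fun i => by
      rw [hδdef]; positivity
    have hδle : ∀ i, δ i ≤ ε / 64 := by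
      intro i
      rw [hδdef]
      calc ε / 64 * (1/2:ℝ) ^ i ≤ ε / 64 * 1 := by
            apply mul_le_mul_of_nonneg_left _ (by positivity)
            exact pow_le_one₀ (by norm_num) (by norm_num)
        _ = ε / 64 := mul_one _
    -- extraction of a good subsequence of `u₀`
    set Q : ℕ → ℕ → ℕ → Prop := fun i N n =>
      G (u₀ n) ≤ δ i ∧ (∀ m ≤ N, f0 m (u₀ n) ≤ δ i) ∧
        (∀ m ≤ N, |f0 n (u₀ m) - G (u₀ m)| ≤ δ i) with hQdef
    have hQ : ∀ i N, ∃ n, N < n ∧ Q i N n := by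
      intro i N
      have h1 : ∀ᶠ n in atTop, G (u₀ n) ≤ δ i :=
        (hGtend.eventually_lt_const (hδpos i)).mono fun n hn => hn.le
      have h2 : ∀ᶠ n in atTop, ∀ m ≤ N, f0 m (u₀ n) ≤ δ i := by
        have h2' : ∀ᶠ n in atTop, ∀ m ∈ Finset.range (N + 1), f0 m (u₀ n) ≤ δ i :=
          (Filter.eventually_all_finset _).2 fun m _ =>
            ((hf0tend m).eventually_lt_const (hδpos i)).mono fun n hn => hn.le
        exact h2'.mono fun n hn m hm => hn m (Finset.mem_range.2 (Nat.lt_succ_of_le hm))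
      have h3 : ∃ᶠ n in atTop, ∀ m ≤ N, |f0 n (u₀ m) - G (u₀ m)| ≤ δ i := by
        have hmemnhds : {φ : WeakDual ℝ F |
            ∀ m ∈ Finset.range (N + 1), |φ (u₀ m) - G (u₀ m)| < δ i} ∈ 𝓝 g := by
          have hev : ∀ᶠ φ in 𝓝 g, ∀ m ∈ Finset.range (N + 1), |φ (u₀ m) - G (u₀ m)| < δ i := by
            refine (Filter.eventually_all_finset _).2 fun m _ => ?_
            have hopen : IsOpen {φ : WeakDual ℝ F | |φ (u₀ m) - G (u₀ m)| < δ i} :=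
              isOpen_lt (((WeakDual.eval_continuous (u₀ m)).sub continuous_const).abs)
                continuous_const
            have hmem : g ∈ {φ : WeakDual ℝ F | |φ (u₀ m) - G (u₀ m)| < δ i} := by
              show |g (u₀ m) - G (u₀ m)| < δ i
              rw [← hGapp]
              simpa using hδpos i
            exact hopen.eventually_mem hmem
          exact hev
        refine (hfreq _ hmemnhds).mono fun k hk m hm => ?_
        exact (hk m (Finset.mem_range.2 (Nat.lt_succ_of_le hm))).le
      obtain ⟨n, hn⟩ := (h3.and_eventually (h1.and (h2.and (eventually_gt_atTop N)))).exists
      exact ⟨n, hn.2.2.2, hn.2.1, hn.2.2.1, hn.1⟩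
    obtain ⟨φ₁, hφ₁, hQ0, hQs⟩ := exists_strictMono_of_rec Q hQ
    set uu : ℕ → F := fun i => u₀ (φ₁ i) with huudef
    set hh : ℕ → (F →L[ℝ] ℝ) := fun i => f0 (φ₁ i) - G with hhhdef
    have hGsmall : ∀ i, G (uu i) ≤ δ i := by
      intro i
      cases i with
      | zero => exact hQ0.1
      | succ n => exact (hQs n).1
    have hfwd : ∀ i j, i < j → f0 (φ₁ i) (uu j) ≤ δ j := by
      intro i j hij
      obtain ⟨n, rfl⟩ : ∃ n, j = n + 1 := ⟨j - 1, (Nat.succ_pred_eq_of_pos (Nat.pos_of_ne_zero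
        (by omega))).symm⟩
      exact (hQs n).2.1 (φ₁ i) (hφ₁.monotone (Nat.lt_succ_iff.1 hij))
    have hbwd : ∀ i j, j < i → |f0 (φ₁ i) (uu j) - G (uu j)| ≤ δ i := by
      intro i j hji
      obtain ⟨n, rfl⟩ : ∃ n, i = n + 1 := ⟨i - 1, (Nat.succ_pred_eq_of_pos (Nat.pos_of_ne_zero
        (by omega))).symm⟩
      exact (hQs n).2.2 (φ₁ j) (hφ₁.monotone (Nat.lt_succ_iff.1 hji))
    have hhapp : ∀ i (y : F), hh i y = f0 (φ₁ i) y - G y := by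
      intro i y; rw [hhhdef]; simp
    have hdiag : ∀ i, ε / 2 ≤ hh i (uu i) := by
      intro i
      rw [hhapp, hf0val (φ₁ i)]
      have h1 := hGsmall i
      have h2 := hu₀norm (φ₁ i)
      have h3 := hδle i
      rw [huudef] at h1
      linarith
    have hhnorm : ∀ i, ‖hh i‖ ≤ 2 := by
      intro i
      rw [hhhdef]
      refine (norm_sub_le _ _).trans ?_
      linarith [hf0norm (φ₁ i), hGnorm]
    have hoffd : ∀ i j, j ≠ i → |hh i (uu j)| ≤ if j < i then δ i else δ j := by
      intro i j hne
      rw [hhapp]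
      split_ifs with hji
      · exact hbwd i j hji
      · have hij : i < j := by omega
        have h1 : f0 (φ₁ i) (uu j) ≤ δ j := hfwd i j hij
        have h2 : 0 ≤ f0 (φ₁ i) (uu j) := hf0pos _ _ (hu₀pos _)
        have h3 : G (uu j) ≤ δ j := hGsmall j
        have h4 : 0 ≤ G (uu j) := hGpos _ (hu₀pos _)
        rw [abs_le]
        constructor <;> linarith
    have huusum : ∀ s : Finset ℕ, ‖∑ k ∈ s, uu k‖ ≤ C := by
      intro s
      have h1 : ∑ k ∈ s, uu k = ∑ m ∈ s.image φ₁, u₀ m :=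
        (Finset.sum_image (fun a _ b _ hab => hφ₁.injective hab)).symm
      rw [h1]; exact hu₀sum _
    have huupos : ∀ i, 0 ≤ uu i := fun i => hu₀pos _
    have huuC : ∀ i, ‖uu i‖ ≤ C := by
      intro i
      have := huusum {i}
      simpa using this
    -- the off-diagonal bound
    have hoff : ∀ i n, ∑ j ∈ (Finset.range n).erase i, |hh i (uu j)| ≤ ε/64 + ε/32 := by
      intro i n
      rw [← Finset.sum_filter_add_sum_filter_not ((Finset.range n).erase i) (· < i)
        (fun j => |hh i (uu j)|)]
      have h1 : ∑ j ∈ ((Finset.range n).erase i).filter (· < i), |hh i (uu j)| ≤ ε/64 := by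
        have hcard : (((Finset.range n).erase i).filter (· < i)).card ≤ i := by
          have hsub : ((Finset.range n).erase i).filter (· < i) ⊆ Finset.range i := by
            intro j hj
            rw [Finset.mem_range]
            exact (Finset.mem_filter.1 hj).2
          calc (((Finset.range n).erase i).filter (· < i)).card
              ≤ (Finset.range i).card := Finset.card_le_card hsub
            _ = i := Finset.card_range i
        have hterm : ∀ j ∈ ((Finset.range n).erase i).filter (· < i), |hh i (uu j)| ≤ δ i := by
          intro j hj
          have hj1 := Finset.mem_filter.1 hj
          have hne : j ≠ i := Finset.ne_of_mem_erase hj1.1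
          have := hoffd i j hne
          rwa [if_pos hj1.2] at this
        calc ∑ j ∈ ((Finset.range n).erase i).filter (· < i), |hh i (uu j)|
            ≤ (((Finset.range n).erase i).filter (· < i)).card • δ i :=
              Finset.sum_le_card_nsmul _ _ _ hterm
          _ = (((Finset.range n).erase i).filter (· < i)).card * δ i := nsmul_eq_mul _ _
          _ ≤ (i : ℝ) * δ i := by
              apply mul_le_mul_of_nonneg_right _ (hδpos i).le
              exact_mod_cast hcard
          _ ≤ ε/64 := by
              simp only [hδdef]
              have hi2 : (i : ℝ) ≤ 2 ^ i := by
                have := (Nat.lt_two_pow_self (n := i)).le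
                exact_mod_cast this
              have h12 : ((1:ℝ)/2) ^ i = ((2:ℝ) ^ i)⁻¹ := by
                rw [div_pow, one_pow, one_div]
              rw [h12, show (i:ℝ) * (ε / 64 * ((2:ℝ)^i)⁻¹) = ε/64 * ((i:ℝ) * ((2:ℝ)^i)⁻¹) by ring]
              have hle1 : (i:ℝ) * ((2:ℝ)^i)⁻¹ ≤ 1 := by
                rw [← div_eq_mul_inv, div_le_one (by positivity)]
                exact hi2
              calc ε/64 * ((i:ℝ) * ((2:ℝ)^i)⁻¹) ≤ ε/64 * 1 :=
                    mul_le_mul_of_nonneg_left hle1 (by positivity)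
                _ = ε/64 := mul_one _
      have h2 : ∑ j ∈ ((Finset.range n).erase i).filter (fun j => ¬ (j < i)), |hh i (uu j)|
          ≤ ε/32 := by
        have hterm : ∀ j ∈ ((Finset.range n).erase i).filter (fun j => ¬ (j < i)),
            |hh i (uu j)| ≤ δ j := by
          intro j hj
          have hj1 := Finset.mem_filter.1 hj
          have hne : j ≠ i := Finset.ne_of_mem_erase hj1.1
          have := hoffd i j hne
          rwa [if_neg hj1.2] at this
        calc ∑ j ∈ ((Finset.range n).erase i).filter (fun j => ¬ (j < i)), |hh i (uu j)|
            ≤ ∑ j ∈ ((Finset.range n).erase i).filter (fun j => ¬ (j < i)), δ j :=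
              Finset.sum_le_sum hterm
          _ ≤ ∑ j ∈ Finset.range n, δ j := by
              apply Finset.sum_le_sum_of_subset_of_nonneg
              · exact (Finset.filter_subset _ _).trans (Finset.erase_subset _ _)
              · exact fun j _ _ => (hδpos j).le
          _ = ε/64 * ∑ j ∈ Finset.range n, (1/2:ℝ) ^ j := by
              rw [hδdef, Finset.mul_sum]
          _ ≤ ε/64 * 2 := by
              apply mul_le_mul_of_nonneg_left (sum_geometric_two_le n) (by positivity)
          _ = ε/32 := by ring
      linarith
    -- the E-side: norming vectors and a thinned subsequence of `z`
    set ε₀ : ℝ := ε / (16 * (2 * C + 1)) with hε₀def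
    have hε₀pos : 0 < ε₀ := by rw [hε₀def]; positivity
    choose x0 hx0pos hx0norm hx0half using fun n => exists_norming_vec (z n) (hzpos n) (hznorm n)
    have hQ' : ∀ (i N : ℕ), ∃ n, N < n ∧ (∀ m ≤ N, z n (x0 m) ≤ ε₀) := by
      intro _ N
      have h2' : ∀ᶠ n in atTop, ∀ m ∈ Finset.range (N + 1), z n (x0 m) ≤ ε₀ :=
        (Filter.eventually_all_finset _).2 fun m _ =>
          ((hznull (x0 m)).eventually_lt_const hε₀pos).mono fun n hn => hn.le
      obtain ⟨n, hn1, hn2⟩ := (h2'.and (eventually_gt_atTop N)).exists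
      exact ⟨n, hn2, fun m hm => hn1 m (Finset.mem_range.2 (Nat.lt_succ_of_le hm))⟩
    obtain ⟨φ₂, hφ₂, hQ'0, hQ's⟩ := exists_strictMono_of_rec _ hQ'
    set zz : ℕ → (E →L[ℝ] ℝ) := fun t => z (φ₂ t) with hzzdef
    set xx : ℕ → E := fun t => x0 (φ₂ t) with hxxdef
    have hzzpos : ∀ t (x : E), 0 ≤ x → 0 ≤ zz t x := fun t x hx => hzpos _ x hx
    have hzzle : ∀ t (x : E), |zz t x| ≤ ‖x‖ := by
      intro t x
      calc |zz t x| = ‖zz t x‖ := (Real.norm_eq_abs _).symm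
        _ ≤ ‖zz t‖ * ‖x‖ := (zz t).le_opNorm x
        _ = ‖x‖ := by rw [hzzdef]; rw [hznorm (φ₂ t), one_mul]
    have hzznull : ∀ x : E, Tendsto (fun t => zz t x) atTop (𝓝 0) := fun x =>
      (hznull x).comp hφ₂.tendsto_atTop
    have hxxpos : ∀ t, 0 ≤ xx t := fun t => hx0pos _
    have hxxnorm : ∀ t, ‖xx t‖ ≤ 1 := fun t => hx0norm _
    have hxxhalf : ∀ t, 1/2 ≤ zz t (xx t) := fun t => hx0half _
    have hxsmall : ∀ s t, s < t → zz t (xx s) ≤ ε₀ := by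
      intro s t hst
      obtain ⟨n, rfl⟩ : ∃ n, t = n + 1 := ⟨t - 1, (Nat.succ_pred_eq_of_pos (Nat.pos_of_ne_zero
        (by omega))).symm⟩
      exact (hQ's n) (φ₂ s) (hφ₂.monotone (Nat.lt_succ_iff.1 hst))
    -- the operators
    set T : ℕ → (E →L[ℝ] F) := fun n => ∑ k ∈ Finset.range n, (zz k).smulRight (uu k) with hTdef
    have hTapp : ∀ n (x : E), T n x = ∑ k ∈ Finset.range n, zz k x • uu k := by
      intro n x
      rw [hTdef]
      simp
    have key1 : ∀ (m n : ℕ) (x : E), 0 ≤ x → m ≤ n → 0 ≤ T n x - T m x := by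
      intro m n x hx hmn
      rw [hTapp, hTapp, ← Finset.sum_Ico_eq_sub _ hmn]
      exact Finset.sum_nonneg fun k _ => real_smul_nonneg (hzzpos k x hx) (huupos k)
    have key2 : ∀ (m n : ℕ) (x : E) (η : ℝ), 0 ≤ x → m ≤ n → 0 ≤ η →
        (∀ k, m ≤ k → zz k x ≤ η) → ‖T n x - T m x‖ ≤ η * C := by
      intro m n x η hx hmn hη hcoef
      rw [hTapp, hTapp, ← Finset.sum_Ico_eq_sub _ hmn]
      have h1 : ∑ k ∈ Finset.Ico m n, zz k x • uu k ≤ η • ∑ k ∈ Finset.Ico m n, uu k := by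
        rw [Finset.smul_sum]
        exact Finset.sum_le_sum fun k hk =>
          smul_le_smul_coeff (hcoef k (Finset.mem_Ico.1 hk).1) (huupos k)
      have h2 : (0:F) ≤ ∑ k ∈ Finset.Ico m n, zz k x • uu k :=
        Finset.sum_nonneg fun k _ => real_smul_nonneg (hzzpos k x hx) (huupos k)
      calc ‖∑ k ∈ Finset.Ico m n, zz k x • uu k‖ ≤ ‖η • ∑ k ∈ Finset.Ico m n, uu k‖ :=
            norm_le_of_nonneg_of_le h2 h1
        _ = η * ‖∑ k ∈ Finset.Ico m n, uu k‖ := by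
            rw [norm_smul, Real.norm_eq_abs, abs_of_nonneg hη]
        _ ≤ η * C := mul_le_mul_of_nonneg_left (huusum _) hη
    have hTbound : ∀ (n : ℕ) (x : E), ‖T n x‖ ≤ 2 * C * ‖x‖ := by
      have hposb : ∀ (n : ℕ) (y : E), 0 ≤ y → ‖T n y‖ ≤ ‖y‖ * C := by
        intro n y hy
        have h0 : T 0 y = 0 := by rw [hTapp]; simp
        have := key2 0 n y ‖y‖ hy (Nat.zero_le n) (norm_nonneg y)
          (fun k _ => (le_abs_self _).trans (hzzle k y))
        rwa [h0, sub_zero] at this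
      intro n x
      calc ‖T n x‖ = ‖T n x⁺ - T n x⁻‖ := by rw [← map_sub, posPart_sub_negPart]
        _ ≤ ‖T n x⁺‖ + ‖T n x⁻‖ := norm_sub_le _ _
        _ ≤ ‖x⁺‖ * C + ‖x⁻‖ * C :=
            add_le_add (hposb n _ (posPart_nonneg x)) (hposb n _ (negPart_nonneg x))
        _ ≤ ‖x‖ * C + ‖x‖ * C := add_le_add
            (mul_le_mul_of_nonneg_right (posPart_norm_le x) hC.le)
            (mul_le_mul_of_nonneg_right (negPart_norm_le x) hC.le)
        _ = 2 * C * ‖x‖ := by ring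
    have hcpos : ∀ y : E, 0 ≤ y → CauchySeq fun n => T n y := by
      intro y hy
      rw [Metric.cauchySeq_iff']
      intro η hηpos
      obtain ⟨N, hN⟩ := Filter.eventually_atTop.1
        ((hzznull y).eventually_lt_const (show (0:ℝ) < η/(2*C) by positivity))
      refine ⟨N, fun n hn => ?_⟩
      rw [dist_eq_norm]
      have hb := key2 N n y (η/(2*C)) hy hn (by positivity) (fun k hk => (hN k hk).le)
      calc ‖T n y - T N y‖ ≤ η/(2*C) * C := hb
        _ < η := by
            rw [div_mul_eq_mul_div, mul_comm]
            rw [div_lt_iff₀ (by positivity)]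
            nlinarith
    have hlim : ∀ x : E, ∃ w, Tendsto (fun n => T n x) atTop (𝓝 w) := by
      intro x
      obtain ⟨w1, h1⟩ := cauchySeq_tendsto_of_complete (hcpos x⁺ (posPart_nonneg x))
      obtain ⟨w2, h2⟩ := cauchySeq_tendsto_of_complete (hcpos x⁻ (negPart_nonneg x))
      refine ⟨w1 - w2, (h1.sub h2).congr fun n => ?_⟩
      rw [← map_sub, posPart_sub_negPart]
    choose Sf hSf using hlim
    have hSadd : ∀ a b : E, Sf (a + b) = Sf a + Sf b := by
      intro a b
      refine tendsto_nhds_unique (hSf (a + b)) (((hSf a).add (hSf b)).congr fun n => ?_)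
      rw [map_add]
    have hSsmul : ∀ (c : ℝ) (x : E), Sf (c • x) = c • Sf x := by
      intro c x
      refine tendsto_nhds_unique (hSf (c • x)) (((hSf x).const_smul c).congr fun n => ?_)
      rw [map_smul]
    have hSfbound : ∀ x, ‖Sf x‖ ≤ 2 * C * ‖x‖ := fun x =>
      le_of_tendsto (hSf x).norm (Filter.Eventually.of_forall fun n => hTbound n x)
    set S : E →L[ℝ] F := LinearMap.mkContinuous
      { toFun := Sf
        map_add' := hSadd
        map_smul' := hSsmul } (2 * C) hSfbound with hSdef
    have hSapp : ∀ x : E, Tendsto (fun n => T n x) atTop (𝓝 (S x)) := fun x => hSf x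
    refine ⟨T, S, ?_, ?_, ?_, ?_, ?_⟩
    · -- positive and compact
      intro n
      constructor
      · intro x hx
        rw [hTapp]
        exact Finset.sum_nonneg fun k _ => real_smul_nonneg (hzzpos k x hx) (huupos k)
      · rw [hTdef]
        exact isCompactOperator_sum _ (fun k => isCompactOperator_smulRight _ _) n
    · -- increasing
      intro n x hx
      exact sub_nonneg.1 (key1 n (n + 1) x hx (Nat.le_succ n))
    · -- below S
      intro n x hx
      refine ge_of_tendsto (hSapp x) ?_
      filter_upwards [eventually_ge_atTop n] with m hm
      exact sub_nonneg.1 (key1 n m x hx hm)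
    · -- least upper bound
      intro R hR x hx
      exact le_of_tendsto (hSapp x) (Filter.Eventually.of_forall fun n => hR n x hx)
    · -- not compact
      intro hcomp
      have hTfun : ∀ (t n : ℕ) (x : E),
          hh t (T n x) = ∑ j ∈ Finset.range n, zz j x * hh t (uu j) := by
        intro t n x
        rw [hTapp, map_sum]
        simp [smul_eq_mul]
      have hmain2 : ∀ (t : ℕ) (x : E), ‖x‖ ≤ 1 →
          |hh t (S x) - zz t x * hh t (uu t)| ≤ ε/64 + ε/32 := by
        intro t x hx1
        have hlim2 : Tendsto (fun n => |hh t (T n x) - zz t x * hh t (uu t)|) atTop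
            (𝓝 (|hh t (S x) - zz t x * hh t (uu t)|)) := by
          have h1 : Tendsto (fun n => hh t (T n x)) atTop (𝓝 (hh t (S x))) :=
            ((hh t).continuous.tendsto _).comp (hSapp x)
          exact (h1.sub tendsto_const_nhds).abs
        refine le_of_tendsto hlim2 ?_
        filter_upwards [eventually_gt_atTop t] with n hn
        rw [hTfun]
        have htmem : t ∈ Finset.range n := Finset.mem_range.2 hn
        rw [← Finset.add_sum_erase _ _ htmem, add_sub_cancel_left]
        calc |∑ j ∈ (Finset.range n).erase t, zz j x * hh t (uu j)|
            ≤ ∑ j ∈ (Finset.range n).erase t, |zz j x * hh t (uu j)| :=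
              Finset.abs_sum_le_sum_abs _ _
          _ ≤ ∑ j ∈ (Finset.range n).erase t, |hh t (uu j)| := by
              refine Finset.sum_le_sum fun j _ => ?_
              rw [abs_mul]
              calc |zz j x| * |hh t (uu j)| ≤ 1 * |hh t (uu j)| :=
                    mul_le_mul_of_nonneg_right ((hzzle j x).trans hx1) (abs_nonneg _)
                _ = |hh t (uu j)| := one_mul _
          _ ≤ ε/64 + ε/32 := hoff t n
      have hsep : ∀ s t : ℕ, s < t → ε/32 ≤ ‖S (xx t) - S (xx s)‖ := by
        intro s t hst
        have hA := hmain2 t (xx t) (hxxnorm t)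
        have hB := hmain2 t (xx s) (hxxnorm s)
        have h1 : ε/2 ≤ hh t (uu t) := hdiag t
        have h2 : hh t (uu t) ≤ 2 * C := by
          calc hh t (uu t) ≤ |hh t (uu t)| := le_abs_self _
            _ ≤ ‖hh t‖ * ‖uu t‖ := by rw [← Real.norm_eq_abs]; exact (hh t).le_opNorm _
            _ ≤ 2 * C := mul_le_mul (hhnorm t) (huuC t) (norm_nonneg _) (by norm_num)
        have h3 : 1/2 ≤ zz t (xx t) := hxxhalf t
        have h4 : zz t (xx t) ≤ 1 := (le_abs_self _).trans ((hzzle t _).trans (hxxnorm t))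
        have h5 : 0 ≤ zz t (xx s) := hzzpos t _ (hxxpos s)
        have h6 : zz t (xx s) ≤ ε₀ := hxsmall s t hst
        have h7 : zz t (xx s) * hh t (uu t) ≤ ε₀ * (2 * C) :=
          mul_le_mul h6 h2 (by linarith) hε₀pos.le
        have h8 : ε/4 ≤ zz t (xx t) * hh t (uu t) := by nlinarith
        have h9 : ε₀ * (2 * C) ≤ ε/16 := by
          have hq : ε₀ = ε / (16 * (2 * C + 1)) := hε₀def
          have hpos1 : (0:ℝ) < 16 * (2 * C + 1) := by nlinarith
          rw [hq, div_mul_eq_mul_div, div_le_div_iff₀ hpos1 (by norm_num : (0:ℝ) < 16)]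
          nlinarith
        have hA' := abs_le.1 hA
        have hB' := abs_le.1 hB
        have h10 : ε/32 * 2 ≤ hh t (S (xx t)) - hh t (S (xx s)) := by linarith
        have h11 : hh t (S (xx t)) - hh t (S (xx s)) = hh t (S (xx t) - S (xx s)) :=
          (map_sub _ _ _).symm
        have h12 : hh t (S (xx t) - S (xx s)) ≤ 2 * ‖S (xx t) - S (xx s)‖ := by
          calc hh t (S (xx t) - S (xx s)) ≤ |hh t (S (xx t) - S (xx s))| := le_abs_self _
            _ ≤ ‖hh t‖ * ‖S (xx t) - S (xx s)‖ := by
                rw [← Real.norm_eq_abs]; exact (hh t).le_opNorm _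
            _ ≤ 2 * ‖S (xx t) - S (xx s)‖ :=
                mul_le_mul_of_nonneg_right (hhnorm t) (norm_nonneg _)
        linarith
      obtain ⟨K, hK, hKmem⟩ := hcomp
      obtain ⟨r, hr, hballK⟩ := Metric.mem_nhds_iff.1 hKmem
      set y : ℕ → F := fun t => S ((r/2) • xx t) with hydef
      have hymem : ∀ t, y t ∈ K := by
        intro t
        apply hballK
        rw [Metric.mem_ball, dist_zero_right, norm_smul, Real.norm_eq_abs,
          abs_of_pos (by positivity : (0:ℝ) < r/2)]
        calc r/2 * ‖xx t‖ ≤ r/2 * 1 := mul_le_mul_of_nonneg_left (hxxnorm t) (by positivity)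
          _ < r := by linarith
      obtain ⟨L, _, ψ, hψ, hconv⟩ := hK.tendsto_subseq hymem
      have hcau := hconv.cauchySeq
      rw [Metric.cauchySeq_iff] at hcau
      obtain ⟨N, hN⟩ := hcau (r/2 * (ε/32)) (by positivity)
      have hd := hN N le_rfl (N + 1) (Nat.le_succ N)
      have hψlt : ψ N < ψ (N + 1) := hψ (Nat.lt_succ_self N)
      have hs := hsep (ψ N) (ψ (N + 1)) hψlt
      have hcalc : dist ((y ∘ ψ) N) ((y ∘ ψ) (N + 1)) =
          r/2 * ‖S (xx (ψ (N + 1))) - S (xx (ψ N))‖ := by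
        simp only [Function.comp_apply, hydef, dist_eq_norm]
        rw [map_smul, map_smul, ← smul_sub, norm_smul, Real.norm_eq_abs,
          abs_of_pos (by positivity : (0:ℝ) < r/2), norm_sub_rev]
      rw [hcalc] at hd
      have := mul_le_mul_of_nonneg_left hs (by positivity : (0:ℝ) ≤ r/2)
      linarith
  refine ⟨main, ?_⟩
  intro hyp
  by_contra hKB
  obtain ⟨T, S, h1, h2, h3, h4, h5⟩ := main hKB
  exact h5 (hyp T S h1 h2 h3 h4)
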